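/- For every complex number q with 0 < |q| < 1, ∏_{j≥1} (1 − q^{2j})² / (1 − q^{j}) = Σ_{n∈ℤ} q^{2n² − n}, where the series on the right-hand side converges absolutely. (This is the ℓ = 1 case of the A_ℓ multisum identity and is a classical identity of Gauss, arising from the principal specialization of the character of the level-1 basic representation of the affine Lie algebra A_1^{(1)}.) -/

import Mathlib

open Finset

namespace Stmt8

/-- triangular numbers -/
def tri : ℕ → ℕ
  | 0 => 0
  | n+1 => tri n + (n+1)

/-- Gaussian binomial coefficients (base `B`), via the `q`-Pascal recursion. -/
def gb (B : ℂ) : ℕ → ℕ → ℂ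
  | _, 0 => 1
  | 0, _+1 => 0
  | M+1, n+1 => gb B M (n+1) + B^(M-n) * gb B M n

lemma gb_zero (B : ℂ) (M : ℕ) : gb B M 0 = 1 := by cases M <;> rfl

lemma gb_of_lt (B : ℂ) : ∀ M n : ℕ, M < n → gb B M n = 0 := by
  intro M
  induction M with
  | zero => intro n h; match n, h with | n+1, _ => rfl
  | succ M ih =>
    intro n h
    match n, h with
    | n+1, h =>
      show gb B M (n+1) + B^(M-n) * gb B M n = 0
      rw [ih (n+1) (by omega), ih n (by omega), mul_zero, add_zero]

lemma gb_self (B : ℂ) : ∀ M : ℕ, gb B M M = 1 := by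
  intro M
  induction M with
  | zero => rfl
  | succ M ih =>
    show gb B M (M+1) + B^(M-M) * gb B M M = 1
    rw [gb_of_lt B M (M+1) (by omega), ih, Nat.sub_self, pow_zero, one_mul, zero_add]

/-- The `q`-binomial theorem. -/
lemma qbinom (B : ℂ) : ∀ M : ℕ, ∀ z : ℂ,
    ∏ k ∈ range M, (1 + z * B^(k+1))
      = ∑ n ∈ range (M+1), B^(tri n) * gb B M n * z^n := by
  intro M
  induction M with
  | zero => intro z; simp [tri, gb_zero]
  | succ M ih =>
    intro z
    rw [prod_range_succ, ih z]
    have h0 : ∀ L : ℕ, B ^ tri 0 * gb B L 0 * z ^ 0 = 1 := by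
      intro L; rw [gb_zero]; simp [tri]
    have h1 : ∑ n ∈ range (M+1), B ^ tri (n+1) * gb B M (n+1) * z ^ (n+1)
        = ∑ n ∈ range M, B ^ tri (n+1) * gb B M (n+1) * z ^ (n+1) := by
      rw [sum_range_succ, gb_of_lt B M (M+1) (by omega)]
      simp
    have h2 : ∀ n ∈ range (M+1),
        (B ^ tri n * gb B M n * z ^ n) * (z * B^(M+1))
          = B ^ tri (n+1) * (B^(M-n) * gb B M n) * z ^ (n+1) := by
      intro n hn
      rw [mem_range] at hn
      have ht : tri (n+1) + (M - n) = tri n + (M+1) := by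
        show tri n + (n+1) + (M-n) = tri n + (M+1); omega
      have hB : B ^ tri (n+1) * B^(M-n) = B ^ tri n * B^(M+1) := by
        rw [← pow_add, ← pow_add, ht]
      calc B ^ tri n * gb B M n * z ^ n * (z * B ^ (M + 1))
          = (B ^ tri n * B^(M+1)) * gb B M n * z^(n+1) := by ring
        _ = (B ^ tri (n+1) * B^(M-n)) * gb B M n * z^(n+1) := by rw [hB]
        _ = B ^ tri (n+1) * (B^(M-n) * gb B M n) * z ^ (n+1) := by ring
    have expand : ∀ n ∈ range (M+1), B ^ tri (n+1) * gb B (M+1) (n+1) * z ^ (n+1)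
        = B ^ tri (n+1) * gb B M (n+1) * z ^ (n+1)
          + B ^ tri (n+1) * (B^(M-n) * gb B M n) * z ^ (n+1) := by
      intro n _
      show B ^ tri (n+1) * (gb B M (n+1) + B^(M-n) * gb B M n) * z ^ (n+1) = _
      ring
    have key : ∑ n ∈ range (M+1+1), B ^ tri n * gb B (M+1) n * z ^ n
        = (∑ n ∈ range (M+1), B ^ tri n * gb B M n * z ^ n)
          + ∑ n ∈ range (M+1), B ^ tri (n+1) * (B^(M-n) * gb B M n) * z ^(n+1) := by
      rw [sum_range_succ' _ (M+1), sum_congr rfl expand, sum_add_distrib, h0, h1,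
        sum_range_succ' (fun n => B ^ tri n * gb B M n * z ^ n) M, h0]
      ring
    rw [key, mul_add, mul_one, sum_mul, sum_congr rfl h2]

/-- partial products of `∏ (1 - B^i)` -/
def P (B : ℂ) (k : ℕ) : ℂ := ∏ i ∈ range k, (1 - B^(i+1))

lemma P_succ (B : ℂ) (k : ℕ) : P B (k+1) = P B k * (1 - B^(k+1)) :=
  prod_range_succ _ _

lemma gb_mul (B : ℂ) : ∀ M, ∀ n ≤ M, gb B M n * (P B n * P B (M-n)) = P B M := by
  intro M
  induction M with
  | zero =>
    intro n hn
    interval_cases n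
    simp [gb_zero, P]
  | succ M ih =>
    intro n hn
    match n with
    | 0 => rw [gb_zero]; simp [P]
    | n+1 =>
      show (gb B M (n+1) + B^(M-n) * gb B M n) * (P B (n+1) * P B (M+1-(n+1))) = P B (M+1)
      rcases eq_or_lt_of_le hn with heq | hlt
      · -- n+1 = M+1
        have hnM : n = M := by omega
        subst hnM
        rw [gb_of_lt B n (n+1) (by omega), Nat.sub_self, pow_zero, one_mul, zero_add,
          gb_self, one_mul, Nat.sub_self]
        show P B (n+1) * P B 0 = P B (n+1)
        simp [P]
      · -- n+1 ≤ M
        have hn1 : n + 1 ≤ M := by omega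
        obtain ⟨d, hd⟩ : ∃ d, M = n + 1 + d := ⟨M - (n+1), by omega⟩
        have e1 : M + 1 - (n+1) = d + 1 := by omega
        have e2 : M - (n+1) = d := by omega
        have e3 : M - n = d + 1 := by omega
        rw [e1, e3, P_succ B d]
        have ihn1 := ih (n+1) hn1
        have ihn : gb B M n * (P B n * P B (d+1)) = P B M := by
          have := ih n (by omega)
          rwa [show M - n = d + 1 by omega] at this
        rw [e2] at ihn1
        have hP : P B (n+1) = P B n * (1 - B^(n+1)) := P_succ B n
        have hBpow : B ^ (d+1) * B ^ (n+1) = B ^ (M+1) := by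
          rw [← pow_add]; congr 1; omega
        calc (gb B M (n+1) + B^(d+1) * gb B M n) * (P B (n+1) * (P B d * (1 - B^(d+1))))
            = (gb B M (n+1) * (P B (n+1) * P B d)) * (1 - B^(d+1))
              + B^(d+1) * (gb B M n * (P B n * (P B d * (1 - B^(d+1))))) * (1 - B^(n+1)) := by
              rw [hP]; ring
          _ = P B M * (1 - B^(d+1)) + B^(d+1) * P B M * (1 - B^(n+1)) := by
              rw [ihn1, show P B d * (1 - B^(d+1)) = P B (d+1) from (P_succ B d).symm, ihn]
          _ = P B M * (1 - B^(d+1) * B^(n+1)) := by ring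
          _ = P B (M+1) := by rw [hBpow, P_succ]


lemma norm_prod_one_add_sub_one {ι : Type*} (s : Finset ι) (f : ι → ℂ) :
    ‖(∏ i ∈ s, (1 + f i)) - 1‖ ≤ Real.exp (∑ i ∈ s, ‖f i‖) - 1 := by
  induction s using Finset.cons_induction with
  | empty => simp
  | cons a s ha ih =>
    rw [prod_cons, sum_cons]
    have expand : (1 + f a) * ∏ i ∈ s, (1 + f i) - 1
        = (1 + f a) * ((∏ i ∈ s, (1 + f i)) - 1) + f a := by ring
    rw [expand]
    have h1 : ‖(1 + f a) * ((∏ i ∈ s, (1 + f i)) - 1) + f a‖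
        ≤ (1 + ‖f a‖) * ‖(∏ i ∈ s, (1 + f i)) - 1‖ + ‖f a‖ := by
      refine le_trans (norm_add_le _ _) ?_
      gcongr
      rw [norm_mul]
      gcongr
      exact le_trans (norm_add_le _ _) (by simp)
    refine le_trans h1 ?_
    have hexp : Real.exp (‖f a‖ + ∑ i ∈ s, ‖f i‖)
        = Real.exp ‖f a‖ * Real.exp (∑ i ∈ s, ‖f i‖) := Real.exp_add _ _
    rw [hexp]
    have e1 : (1:ℝ) + ‖f a‖ ≤ Real.exp ‖f a‖ := by
      linarith [Real.add_one_le_exp ‖f a‖]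
    have e2 : ‖(∏ i ∈ s, (1 + f i)) - 1‖ ≤ Real.exp (∑ i ∈ s, ‖f i‖) - 1 := ih
    nlinarith [norm_nonneg ((∏ i ∈ s, (1 + f i)) - 1), norm_nonneg (f a),
      Real.exp_pos (∑ i ∈ s, ‖f i‖), (Real.exp_pos ‖f a‖).le,
      Real.exp_nonneg (∑ i ∈ s, ‖f i‖)]

lemma norm_prod_one_add_le {ι : Type*} (s : Finset ι) (f : ι → ℂ) :
    ‖∏ i ∈ s, (1 + f i)‖ ≤ Real.exp (∑ i ∈ s, ‖f i‖) := by
  have := norm_prod_one_add_sub_one s f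
  have h := norm_sub_norm_le (∏ i ∈ s, (1 + f i)) 1
  rw [norm_one] at h
  linarith

lemma geom_tail_sum_le {r : ℝ} (h0 : 0 ≤ r) (h1 : r < 1) (s : Finset ℕ) (a : ℕ)
    (hs : ∀ i ∈ s, a ≤ i) : ∑ i ∈ s, r^(i+1) ≤ r^(a+1) * (1-r)⁻¹ := by
  set M := (s.sup id) + 1 with hM
  have hsub : s ⊆ Ico a M := by
    intro i hi
    rw [mem_Ico]
    exact ⟨hs i hi, by have := le_sup (f := id) hi; simp only [id] at this; omega⟩
  have step1 : ∑ i ∈ s, r^(i+1) ≤ ∑ i ∈ Ico a M, r^(i+1) :=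
    sum_le_sum_of_subset_of_nonneg hsub (fun i _ _ => pow_nonneg h0 _)
  refine le_trans step1 ?_
  have step2 : ∑ i ∈ Ico a M, r^(i+1) = r^(a+1) * ∑ j ∈ range (M - a), r^j := by
    rw [mul_sum]
    rw [sum_Ico_eq_sum_range]
    refine sum_congr rfl fun j _ => ?_
    rw [← pow_add]
    congr 1
    omega
  rw [step2]
  have step3 : ∑ j ∈ range (M - a), r^j ≤ (1-r)⁻¹ := by
    have hs2 := summable_geometric_of_lt_one h0 h1
    have := Summable.sum_le_tsum (range (M - a)) (fun i _ => pow_nonneg h0 i) hs2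
    rwa [tsum_geometric_of_lt_one h0 h1] at this
  have : 0 ≤ r^(a+1) := pow_nonneg h0 _
  nlinarith

/-- products over `Ico` intervals of `1 - B^(i+1)` -/
def tp (B : ℂ) (a b : ℕ) : ℂ := ∏ i ∈ Ico a b, (1 - B^(i+1))

lemma tp_eq (B : ℂ) (a b : ℕ) : tp B a b = ∏ i ∈ Ico a b, (1 + (-(B^(i+1)))) := by
  unfold tp
  exact prod_congr rfl fun i _ => by ring

lemma tp_sub_one_norm {B : ℂ} (hB : ‖B‖ < 1) (a b : ℕ) :
    ‖tp B a b - 1‖ ≤ Real.exp (‖B‖^(a+1) * (1-‖B‖)⁻¹) - 1 := by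
  rw [tp_eq]
  refine le_trans (norm_prod_one_add_sub_one _ _) ?_
  have hsum : ∑ i ∈ Ico a b, ‖-(B^(i+1))‖ ≤ ‖B‖^(a+1) * (1-‖B‖)⁻¹ := by
    have : ∀ i ∈ Ico a b, ‖-(B^(i+1))‖ = ‖B‖^(i+1) := fun i _ => by
      rw [norm_neg, norm_pow]
    rw [sum_congr rfl this]
    exact geom_tail_sum_le (norm_nonneg B) hB _ a (fun i hi => (mem_Ico.1 hi).1)
  have := Real.exp_le_exp.2 hsum
  linarith

lemma tp_norm_le {B : ℂ} (hB : ‖B‖ < 1) (a b : ℕ) :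
    ‖tp B a b‖ ≤ Real.exp (‖B‖ * (1-‖B‖)⁻¹) := by
  rw [tp_eq]
  refine le_trans (norm_prod_one_add_le _ _) ?_
  refine Real.exp_le_exp.2 ?_
  have : ∀ i ∈ Ico a b, ‖-(B^(i+1))‖ = ‖B‖^(i+1) := fun i _ => by
    rw [norm_neg, norm_pow]
  rw [sum_congr rfl this]
  have := geom_tail_sum_le (norm_nonneg B) hB (Ico a b) 0 (fun i _ => Nat.zero_le i)
  rwa [pow_one] at this

lemma tp_tendsto_one {B : ℂ} (hB : ‖B‖ < 1) {a b : ℕ → ℕ}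
    (ha : Filter.Tendsto a Filter.atTop Filter.atTop) :
    Filter.Tendsto (fun N => tp B (a N) (b N)) Filter.atTop (nhds 1) := by
  rw [tendsto_iff_norm_sub_tendsto_zero]
  have key : Filter.Tendsto (fun N => Real.exp (‖B‖^(a N + 1) * (1-‖B‖)⁻¹) - 1)
      Filter.atTop (nhds 0) := by
    have h1 : Filter.Tendsto (fun N => ‖B‖^(a N + 1) * (1-‖B‖)⁻¹) Filter.atTop (nhds 0) := by
      have hpow : Filter.Tendsto (fun k : ℕ => ‖B‖^(k + 1)) Filter.atTop (nhds 0) := by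
        have := (tendsto_pow_atTop_nhds_zero_of_lt_one (norm_nonneg B) hB).comp
          (Filter.tendsto_add_atTop_nat 1)
        exact this
      have := (hpow.comp ha).mul_const (1-‖B‖)⁻¹
      simpa using this
    have := (Real.continuous_exp.tendsto 0).comp h1
    simpa using this.sub_const 1
  refine squeeze_zero (fun N => norm_nonneg _) (fun N => ?_) key
  exact tp_sub_one_norm hB (a N) (b N)


lemma sum_arith (N : ℕ) : ∑ i ∈ range N, (4*i+4) = 2*N^2+2*N := by
  induction N with
  | zero => simp
  | succ N ih => rw [sum_range_succ, ih]; ring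

lemma tri_eq (n : ℕ) : 2 * tri n = n * (n+1) := by
  induction n with
  | zero => rfl
  | succ n ih =>
    show 2 * (tri n + (n+1)) = _
    rw [mul_add, ih]
    ring

lemma exponent_le (N n : ℕ) (hn : n ≤ 2*N) : (4*N+3)*n ≤ 2*N^2+N+2*n^2+2*n := by
  nlinarith [sq_nonneg ((n:ℤ) - N)]

/-- the specialization of the `q`-binomial theorem -/
lemma finite_id {q : ℂ} (hq : q ≠ 0) (N : ℕ) :
    ∏ j ∈ range N, ((1 + q^(4*j+1)) * (1 + q^(4*j+3)))
      = ∑ n ∈ range (2*N+1), q^(2*N^2+N+2*n^2+2*n - (4*N+3)*n) * gb (q^4) (2*N) n := by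
  have h4 : (q^(4*N+3)) ≠ 0 := pow_ne_zero _ hq
  have key := qbinom (q^4) (2*N) ((q^(4*N+3))⁻¹)
  -- rewrite the left side of `key`
  have lhs_eq : ∏ k ∈ range (2*N), (1 + (q^(4*N+3))⁻¹ * (q^4)^(k+1))
      = (q^(2*N^2+2*N) * (q^((4*N+3)*N))⁻¹)
        * (∏ j ∈ range N, (1 + q^(4*j+3))) * ∏ j ∈ range N, (1 + q^(4*j+1)) := by
    rw [two_mul, prod_range_add]
    have second : ∀ i ∈ range N, (1 + (q^(4*N+3))⁻¹ * (q^4)^(N+i+1)) = 1 + q^(4*i+1) := by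
      intro i _
      congr 1
      have e1 : (q^4)^(N+i+1) = q^(4*N+3) * q^(4*i+1) := by
        rw [← pow_mul, ← pow_add]; congr 1; omega
      rw [e1, inv_mul_cancel_left₀ h4]
    have first : ∀ i ∈ range N, (1 + (q^(4*N+3))⁻¹ * (q^4)^(i+1))
        = (q^(4*i+4) * (q^(4*N+3))⁻¹) * (1 + q^(4*(N-1-i)+3)) := by
      intro i hi
      rw [mem_range] at hi
      have e1 : (q^4)^(i+1) = q^(4*i+4) := by rw [show (4:ℕ)*i+4 = 4*(i+1) from by omega, pow_mul]
      have e2 : q^(4*i+4) * q^(4*(N-1-i)+3) = q^(4*N+3) := by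
        rw [← pow_add]; congr 1; omega
      rw [e1]
      calc 1 + (q^(4*N+3))⁻¹ * q^(4*i+4)
          = ((q^(4*i+4) * q^(4*(N-1-i)+3)) * (q^(4*N+3))⁻¹) * 1 + (q^(4*N+3))⁻¹ * q^(4*i+4) := by
            rw [e2, mul_inv_cancel₀ h4]; ring
        _ = (q^(4*i+4) * (q^(4*N+3))⁻¹) * (1 + q^(4*(N-1-i)+3)) := by ring
    rw [prod_congr rfl second, prod_congr rfl first, prod_mul_distrib, prod_mul_distrib]
    have p1 : ∏ i ∈ range N, q^(4*i+4) = q^(2*N^2+2*N) := by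
      rw [prod_pow_eq_pow_sum, sum_arith]
    have p2 : ∏ _i ∈ range N, (q^(4*N+3))⁻¹ = (q^((4*N+3)*N))⁻¹ := by
      rw [prod_const, inv_pow, ← pow_mul, card_range]
    have p3 : ∏ i ∈ range N, (1 + q^(4*(N-1-i)+3)) = ∏ j ∈ range N, (1 + q^(4*j+3)) :=
      prod_range_reflect (fun j => 1 + q^(4*j+3)) N
    rw [p1, p2, p3]
    ring
  rw [lhs_eq] at key
  -- multiply by q^(2N²+N)
  have cancel : q^(2*N^2+N) * (q^(2*N^2+2*N) * (q^((4*N+3)*N))⁻¹) = 1 := by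
    rw [← mul_assoc, ← pow_add, show 2*N^2+N+(2*N^2+2*N) = (4*N+3)*N from by ring,
      mul_inv_cancel₀ (pow_ne_zero _ hq)]
  have main := congrArg (fun t => q^(2*N^2+N) * t) key
  rw [show q ^ (2*N^2+N) * (q ^ (2*N^2+2*N) * (q ^ ((4*N+3)*N))⁻¹
        * (∏ j ∈ range N, (1 + q^(4*j+3))) * ∏ j ∈ range N, (1 + q^(4*j+1)))
      = (q^(2*N^2+N) * (q^(2*N^2+2*N) * (q^((4*N+3)*N))⁻¹))
        * ((∏ j ∈ range N, (1 + q^(4*j+3))) * ∏ j ∈ range N, (1 + q^(4*j+1))) from by ring,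
    cancel, one_mul] at main
  rw [mul_sum] at main
  have term_eq : ∀ n ∈ range (2*N+1),
      q^(2*N^2+N) * ((q^4)^(tri n) * gb (q^4) (2*N) n * ((q^(4*N+3))⁻¹)^n)
        = q^(2*N^2+N+2*n^2+2*n - (4*N+3)*n) * gb (q^4) (2*N) n := by
    intro n hn
    rw [mem_range] at hn
    have hle := exponent_le N n (by omega)
    have e1 : (q^4)^(tri n) = q^(2*n^2+2*n) := by
      rw [← pow_mul]
      congr 1
      have := tri_eq n
      nlinarith
    have e2 : ((q^(4*N+3))⁻¹)^n = (q^((4*N+3)*n))⁻¹ := by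
      rw [inv_pow, ← pow_mul]
    have e3 : q^(2*N^2+N+2*n^2+2*n - (4*N+3)*n) * q^((4*N+3)*n)
        = q^(2*N^2+N) * q^(2*n^2+2*n) := by
      rw [← pow_add, ← pow_add]
      congr 1
      omega
    rw [e1, e2]
    apply mul_right_cancel₀ (b := q^((4*N+3)*n)) (pow_ne_zero _ hq)
    calc q^(2*N^2+N) * (q^(2*n^2+2*n) * gb (q^4) (2*N) n * (q^((4*N+3)*n))⁻¹) * q^((4*N+3)*n)
        = q^(2*N^2+N) * q^(2*n^2+2*n) * gb (q^4) (2*N) n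
            * ((q^((4*N+3)*n))⁻¹ * q^((4*N+3)*n)) := by ring
      _ = q^(2*N^2+N) * q^(2*n^2+2*n) * gb (q^4) (2*N) n := by
            rw [inv_mul_cancel₀ (pow_ne_zero _ hq), mul_one]
      _ = q^(2*N^2+N+2*n^2+2*n - (4*N+3)*n) * q^((4*N+3)*n) * gb (q^4) (2*N) n := by
            rw [e3]
      _ = q^(2*N^2+N+2*n^2+2*n - (4*N+3)*n) * gb (q^4) (2*N) n * q^((4*N+3)*n) := by ring
  rw [sum_congr rfl term_eq] at main
  rw [prod_mul_distrib, mul_comm]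
  exact main


lemma one_sub_ne {B : ℂ} (hB : ‖B‖ < 1) (k : ℕ) : 1 - B^(k+1) ≠ 0 := by
  intro h
  have h1 : B^(k+1) = 1 := by
    have := sub_eq_zero.mp h
    exact this.symm
  have h2 : ‖B^(k+1)‖ < 1 := by
    rw [norm_pow]
    exact pow_lt_one₀ (norm_nonneg B) hB (by omega)
  rw [h1, norm_one] at h2
  exact lt_irrefl _ h2

lemma P_ne_zero {B : ℂ} (hB : ‖B‖ < 1) (k : ℕ) : P B k ≠ 0 :=
  prod_ne_zero_iff.mpr (fun i _ => one_sub_ne hB i)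

lemma P_mul_tp (B : ℂ) {a b : ℕ} (h : a ≤ b) : P B a * tp B a b = P B b :=
  prod_range_mul_prod_Ico _ h

lemma P_mul_gb_eq_tp {B : ℂ} (hB : ‖B‖ < 1) (N n : ℕ) (hn : n ≤ 2*N) :
    P B (2*N) * gb B (2*N) n = tp B n (2*N) * tp B (2*N-n) (2*N) := by
  apply mul_left_cancel₀ (mul_ne_zero (P_ne_zero hB n) (P_ne_zero hB (2*N - n)))
  calc (P B n * P B (2*N-n)) * (P B (2*N) * gb B (2*N) n)
      = (gb B (2*N) n * (P B n * P B (2*N - n))) * P B (2*N) := by ring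
    _ = P B (2*N) * P B (2*N) := by rw [gb_mul B (2*N) n hn]
    _ = (P B n * tp B n (2*N)) * (P B (2*N-n) * tp B (2*N-n) (2*N)) := by
        rw [P_mul_tp B hn, P_mul_tp B (Nat.sub_le _ _)]
    _ = (P B n * P B (2*N-n)) * (tp B n (2*N) * tp B (2*N-n) (2*N)) := by ring

/-- the partial products on the `A` side -/
def Aprod (q : ℂ) (N : ℕ) : ℂ :=
  P (q^4) (2*N) * ∏ j ∈ range N, ((1 + q^(4*j+1)) * (1 + q^(4*j+3)))

/-- the summand `q^(2m²+m)` -/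
noncomputable def term (q : ℂ) (m : ℤ) : ℂ := q ^ (2*m^2-m)

/-- the correction factors -/
def c (q : ℂ) (N : ℕ) (m : ℤ) : ℂ :=
  if m.natAbs ≤ N then
    tp (q^4) ((N:ℤ) + m).toNat (2*N) * tp (q^4) ((N:ℤ) - m).toNat (2*N)
  else 0

lemma A_eq_sum {q : ℂ} (hq : q ≠ 0) (hq1 : ‖q‖ < 1) (N : ℕ) :
    Aprod q N = ∑ n ∈ range (2*N+1),
      q^(2*N^2+N+2*n^2+2*n - (4*N+3)*n)
        * (tp (q^4) n (2*N) * tp (q^4) (2*N-n) (2*N)) := by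
  have hB : ‖(q^4 : ℂ)‖ < 1 := by
    rw [norm_pow]
    exact pow_lt_one₀ (norm_nonneg q) hq1 (by omega)
  unfold Aprod
  rw [finite_id hq N, mul_sum]
  refine sum_congr rfl fun n hn => ?_
  rw [mem_range] at hn
  rw [← P_mul_gb_eq_tp hB N n (by omega)]
  ring

lemma A_eq_tsum {q : ℂ} (hq : q ≠ 0) (hq1 : ‖q‖ < 1) (N : ℕ) :
    Aprod q N = ∑' m : ℤ, term q m * c q N m := by
  have hsupp : ∀ m : ℤ, m ∉ Finset.Icc (-(N:ℤ)) (N:ℤ) → term q m * c q N m = 0 := by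
    intro m hm
    rw [Finset.mem_Icc] at hm
    have : ¬ (m.natAbs ≤ N) := by omega
    simp only [c, if_neg this, mul_zero]
  rw [tsum_eq_sum hsupp]
  rw [A_eq_sum hq hq1 N]
  refine sum_nbij' (i := fun (n : ℕ) => (n : ℤ) - N) (j := fun (m : ℤ) => (m + N).toNat)
    ?_ ?_ ?_ ?_ ?_
  · intro n hn
    rw [mem_range] at hn
    rw [Finset.mem_Icc]
    omega
  · intro m hm
    rw [Finset.mem_Icc] at hm
    rw [mem_range]
    omega
  · intro n hn
    rw [mem_range] at hn
    omega
  · intro m hm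
    rw [Finset.mem_Icc] at hm
    omega
  · intro n hn
    rw [mem_range] at hn
    have habs : ((n:ℤ) - N).natAbs ≤ N := by omega
    simp only [term, c, if_pos habs]
    have e1 : ((N:ℤ) + ((n:ℤ) - N)).toNat = n := by omega
    have e2 : ((N:ℤ) - ((n:ℤ) - N)).toNat = 2*N - n := by omega
    rw [e1, e2]
    congr 1
    have hle := exponent_le N n (by omega)
    have eexp : 2*((n:ℤ) - N)^2 - ((n:ℤ) - N)
        = ((2*N^2+N+2*n^2+2*n - (4*N+3)*n : ℕ) : ℤ) := by
      push_cast [Nat.cast_sub hle]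
      ring
    rw [eexp, zpow_natCast]


lemma term_exponent_nonneg (m : ℤ) : (0:ℤ) ≤ 2*m^2 - m := by nlinarith [sq_nonneg m]

lemma term_exponent_ge (m : ℤ) : (m.natAbs : ℤ) ≤ 2*m^2 - m := by
  rcases le_or_gt 0 m with h | h
  · rw [Int.natAbs_of_nonneg h]; nlinarith
  · have : (m.natAbs : ℤ) = -m := by omega
    rw [this]; nlinarith

lemma term_norm_le {q : ℂ} (hq1 : ‖q‖ < 1) (m : ℤ) : ‖term q m‖ ≤ ‖q‖ ^ m.natAbs := by
  have hnn := term_exponent_nonneg m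
  have hge : m.natAbs ≤ (2*m^2 - m).toNat := by
    have := term_exponent_ge m; omega
  unfold term
  rw [norm_zpow]
  rw [show (2*m^2 - m) = (((2*m^2 - m).toNat : ℕ) : ℤ) from (Int.toNat_of_nonneg hnn).symm,
    zpow_natCast]
  exact pow_le_pow_of_le_one (norm_nonneg q) hq1.le hge

lemma c_norm_le {q : ℂ} (hq1 : ‖q‖ < 1) (N : ℕ) (m : ℤ) :
    ‖c q N m‖ ≤ Real.exp (‖(q^4:ℂ)‖ * (1-‖(q^4:ℂ)‖)⁻¹) ^ 2 := by
  have hB : ‖(q^4:ℂ)‖ < 1 := by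
    rw [norm_pow]; exact pow_lt_one₀ (norm_nonneg q) hq1 (by omega)
  unfold c
  split_ifs with h
  · rw [norm_mul, sq]
    exact mul_le_mul (tp_norm_le hB _ _) (tp_norm_le hB _ _) (norm_nonneg _)
      (Real.exp_nonneg _)
  · simp only [norm_zero]
    positivity

lemma summable_pow_natAbs {r : ℝ} (h0 : 0 ≤ r) (h1 : r < 1) :
    Summable (fun m : ℤ => r ^ m.natAbs) := by
  apply Summable.of_nat_of_neg
  · simpa using summable_geometric_of_lt_one h0 h1
  · have : ∀ n : ℕ, ((-n : ℤ)).natAbs = n := fun n => by simp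
    simp only [this]
    exact summable_geometric_of_lt_one h0 h1

lemma c_tendsto {q : ℂ} (hq1 : ‖q‖ < 1) (m : ℤ) :
    Filter.Tendsto (fun N => c q N m) Filter.atTop (nhds 1) := by
  have hB : ‖(q^4:ℂ)‖ < 1 := by
    rw [norm_pow]; exact pow_lt_one₀ (norm_nonneg q) hq1 (by omega)
  have ha : Filter.Tendsto (fun N : ℕ => ((N:ℤ) + m).toNat) Filter.atTop Filter.atTop := by
    apply Filter.tendsto_atTop_mono (f := fun N : ℕ => N - m.natAbs)
    · intro N; omega
    · exact Filter.tendsto_sub_atTop_nat _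
  have ha' : Filter.Tendsto (fun N : ℕ => ((N:ℤ) - m).toNat) Filter.atTop Filter.atTop := by
    apply Filter.tendsto_atTop_mono (f := fun N : ℕ => N - m.natAbs)
    · intro N; omega
    · exact Filter.tendsto_sub_atTop_nat _
  have h1 := tp_tendsto_one hB (b := fun N => 2*N) ha
  have h2 := tp_tendsto_one hB (b := fun N => 2*N) ha'
  have hmul := h1.mul h2
  rw [one_mul] at hmul
  apply hmul.congr'
  filter_upwards [Filter.eventually_ge_atTop m.natAbs] with N hN
  rw [c, if_pos hN]

lemma tendsto_A {q : ℂ} (hq : q ≠ 0) (hq1 : ‖q‖ < 1) :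
    Filter.Tendsto (fun N => Aprod q N) Filter.atTop (nhds (∑' m : ℤ, term q m)) := by
  set E := Real.exp (‖(q^4:ℂ)‖ * (1-‖(q^4:ℂ)‖)⁻¹) with hE
  have hsum : Summable (fun m : ℤ => E^2 * ‖q‖ ^ m.natAbs) :=
    (summable_pow_natAbs (norm_nonneg q) hq1).mul_left _
  have hlim : ∀ m : ℤ, Filter.Tendsto (fun N => term q m * c q N m)
      Filter.atTop (nhds (term q m)) := by
    intro m
    have := Filter.Tendsto.mul (tendsto_const_nhds (x := term q m)) (c_tendsto hq1 m)
    rwa [mul_one] at this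
  have hbound : ∀ᶠ N in Filter.atTop, ∀ m : ℤ, ‖term q m * c q N m‖ ≤ E^2 * ‖q‖ ^ m.natAbs := by
    refine Filter.Eventually.of_forall fun N m => ?_
    rw [norm_mul]
    calc ‖term q m‖ * ‖c q N m‖ ≤ (‖q‖ ^ m.natAbs) * E^2 :=
          mul_le_mul (term_norm_le hq1 m) (c_norm_le hq1 N m) (norm_nonneg _)
            (pow_nonneg (norm_nonneg q) _)
      _ = E^2 * ‖q‖ ^ m.natAbs := by ring
  have main := tendsto_tsum_of_dominated_convergence hsum hlim hbound
  exact main.congr (fun N => (A_eq_tsum hq hq1 N).symm)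


/-- the partial products on the product side -/
def Hprod (q : ℂ) (M : ℕ) : ℂ := ∏ j ∈ range M, ((1 - q^(2*j+2)) * (1 + q^(j+1)))

lemma Hprod_succ (q : ℂ) (M : ℕ) :
    Hprod q (M+1) = Hprod q M * ((1 - q^(2*M+2)) * (1 + q^(M+1))) := prod_range_succ _ _

lemma star (q : ℂ) : ∀ K : ℕ, Hprod q (4*K) * P (q^2) (2*K) = Aprod q K * P (q^2) (4*K) := by
  intro K
  induction K with
  | zero => simp [Hprod, Aprod, P]
  | succ K ih =>
    rw [show 4*(K+1) = 4*K+1+1+1+1 from by ring, show 2*(K+1) = 2*K+1+1 from by ring,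
      Hprod_succ, Hprod_succ, Hprod_succ, Hprod_succ, P_succ, P_succ,
      P_succ (q^2) (4*K+1+1+1), P_succ (q^2) (4*K+1+1), P_succ (q^2) (4*K+1),
      P_succ (q^2) (4*K)]
    have hA : Aprod q (K+1) = Aprod q K
        * ((1-(q^4)^(2*K+1)) * (1-(q^4)^(2*K+2)) * ((1+q^(4*K+1))*(1+q^(4*K+3)))) := by
      unfold Aprod
      rw [show 2*(K+1) = 2*K+1+1 from by ring, P_succ, P_succ, prod_range_succ]
      ring
    rw [hA]
    linear_combination ((1-(q^4)^(2*K+1)) * (1-(q^4)^(2*K+2))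
      * ((1+q^(4*K+1))*(1+q^(4*K+3)))
      * ((1-(q^2)^(4*K+1))*(1-(q^2)^(4*K+2))*(1-(q^2)^(4*K+3))*(1-(q^2)^(4*K+4)))) * ih

lemma Hprod_four_eq {q : ℂ} (hq1 : ‖q‖ < 1) (K : ℕ) :
    Hprod q (4*K) = Aprod q K * tp (q^2) (2*K) (4*K) := by
  have h2 : ‖(q^2:ℂ)‖ < 1 := by
    rw [norm_pow]; exact pow_lt_one₀ (norm_nonneg q) hq1 (by omega)
  apply mul_right_cancel₀ (b := P (q^2) (2*K)) (P_ne_zero h2 _)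
  rw [star q K]
  rw [← P_mul_tp (q^2) (show 2*K ≤ 4*K by omega)]
  ring

lemma Hprod_four_tendsto {q : ℂ} (hq : q ≠ 0) (hq1 : ‖q‖ < 1) :
    Filter.Tendsto (fun K => Hprod q (4*K)) Filter.atTop (nhds (∑' m : ℤ, term q m)) := by
  have h2 : ‖(q^2:ℂ)‖ < 1 := by
    rw [norm_pow]; exact pow_lt_one₀ (norm_nonneg q) hq1 (by omega)
  have htp : Filter.Tendsto (fun K : ℕ => tp (q^2) (2*K) (4*K)) Filter.atTop (nhds 1) := by
    apply tp_tendsto_one h2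
    exact Filter.tendsto_atTop_mono (fun K => by omega : ∀ K : ℕ, K ≤ 2*K) Filter.tendsto_id
  have := (tendsto_A hq hq1).mul htp
  rw [mul_one] at this
  exact this.congr (fun K => (Hprod_four_eq hq1 K).symm)

lemma multipliable_h {q : ℂ} (hq1 : ‖q‖ < 1) :
    Multipliable (fun j : ℕ => (1 - q^(2*j+2)) * (1 + q^(j+1))) := by
  set u : ℕ → ℂ := fun j => q^2*(q^2)^j + q^3*(q^3)^j - q*q^j with hu_def
  have hfe : ∀ j : ℕ, 1 - u j = (1 - q^(2*j+2)) * (1 + q^(j+1)) := by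
    intro j
    simp only [hu_def]
    ring
  have h2 : ‖(q^2:ℂ)‖ < 1 := by
    rw [norm_pow]; exact pow_lt_one₀ (norm_nonneg q) hq1 (by omega)
  have h3 : ‖(q^3:ℂ)‖ < 1 := by
    rw [norm_pow]; exact pow_lt_one₀ (norm_nonneg q) hq1 (by omega)
  have hu : Summable u := by
    apply Summable.sub
    apply Summable.add
    · exact (summable_geometric_of_norm_lt_one h2).mul_left _
    · exact (summable_geometric_of_norm_lt_one h3).mul_left _
    · exact (summable_geometric_of_norm_lt_one hq1).mul_left _
  have hne : ∀ j : ℕ, (1 : ℂ) - u j ≠ 0 := by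
    intro j
    rw [hfe j]
    apply mul_ne_zero
    · rw [show 2*j+2 = (2*j+1)+1 from by omega]
      exact one_sub_ne hq1 (2*j+1)
    · intro h
      have h1 : q^(j+1) = -1 := by linear_combination h
      have h2' : ‖q^(j+1)‖ < 1 := by
        rw [norm_pow]; exact pow_lt_one₀ (norm_nonneg q) hq1 (by omega)
      rw [h1, norm_neg, norm_one] at h2'
      exact lt_irrefl _ h2'
  have hmult : Multipliable (fun j : ℕ => 1 - u j) := by
    exact Complex.multipliable_of_summable_log hu.clog_one_sub
  exact hmult.congr hfe


lemma tprod_h_eq {q : ℂ} (hq : q ≠ 0) (hq1 : ‖q‖ < 1) :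
    ∏' j : ℕ, ((1 - q^(2*j+2)) * (1 + q^(j+1))) = ∑' m : ℤ, term q m := by
  have hm := multipliable_h hq1
  have h1 := hm.hasProd.tendsto_prod_nat
  have h4 : Filter.Tendsto (fun K : ℕ => 4*K) Filter.atTop Filter.atTop :=
    Filter.tendsto_atTop_mono (fun K => by omega : ∀ K : ℕ, K ≤ 4*K) Filter.tendsto_id
  have hsub := h1.comp h4
  have hsub' : Filter.Tendsto (fun K : ℕ => Hprod q (4*K)) Filter.atTop
      (nhds (∏' j : ℕ, ((1 - q^(2*j+2)) * (1 + q^(j+1))))) := hsub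
  exact tendsto_nhds_unique hsub' (Hprod_four_tendsto hq hq1)

end Stmt8

/-- Gauss's identity: For every complex `q` with `0 < |q| < 1`,
`∏_{j≥1} (1 − q^{2j})²/(1 − q^j) = Σ_{n∈ℤ} q^{2n² − n}`, where the series on the
right converges absolutely. -/
theorem stmt_8 :
    ∀ (q : ℂ), 0 < ‖q‖ → ‖q‖ < 1 →
      Summable (fun n : ℤ => ‖q ^ (2 * n ^ 2 - n)‖) ∧
      (∏' j : ℕ, (1 - q ^ (2 * (j + 1))) ^ 2 / (1 - q ^ (j + 1)))
        = ∑' n : ℤ, q ^ (2 * n ^ 2 - n) := by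
  intro q h0 h1
  have hq1 : ‖q‖ < 1 := by exact h1
  have hq : q ≠ 0 := by
    intro h
    rw [h] at h0
    simp at h0
  constructor
  · refine Summable.of_nonneg_of_le (fun n => ?_) (fun n => ?_)
      (Stmt8.summable_pow_natAbs (norm_nonneg q) hq1)
    · exact norm_nonneg _
    · have := Stmt8.term_norm_le hq1 n
      rwa [Stmt8.term] at this
  · have step1 : (∏' j : ℕ, (1 - q ^ (2 * (j + 1))) ^ 2 / (1 - q ^ (j + 1)))
        = ∏' j : ℕ, ((1 - q^(2*j+2)) * (1 + q^(j+1))) := by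
      refine tprod_congr fun j => ?_
      have hne := Stmt8.one_sub_ne hq1 j
      field_simp
      ring
    rw [step1, Stmt8.tprod_h_eq hq hq1]
    exact tsum_congr fun n => rfl
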